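/- arXiv:2512.21128 — 2 statements merged into one kernel-verified Lean document; each statement's English description precedes it below -/
import Mathlib

section
/- Let k ≥ 1, let G be a k-edge-connected finite simple graph on V, fix a root r ∈ V, and let S ⊆ V∖{r} be a k-cut. If v and v′ are snug vertices with v, v′ ∉ S such that (S, S ∪ {v}) are snug shores for v and (S, S ∪ {v′}) are snug shores for v′, then v = v′. In other words, for every k-cut S ⊆ V∖{r} there is at most one vertex v ∈ V∖S such that (S, S ∪ {v}) form snug shores for v. -/
open Finset

variable {V : Type*} [Fintype V] [DecidableEq V]

/-- `Crosses S e`: exactly one endpoint of the edge/link `e` lies in `S`. -/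
def Crosses (S : Finset V) (e : Sym2 V) : Prop :=
  ∃ x y : V, e = s(x, y) ∧ x ∈ S ∧ y ∉ S

instance (S : Finset V) : DecidablePred (Crosses S) := fun e =>
  decidable_of_iff (∃ x y : V, e = s(x, y) ∧ x ∈ S ∧ y ∉ S) Iff.rfl

/-- The cut `δ(S)`: edges of `G` with exactly one endpoint in `S`. -/
def cutEdges (G : SimpleGraph V) [DecidableRel G.Adj] (S : Finset V) :
    Finset (Sym2 V) :=
  G.edgeFinset.filter fun e => Crosses S e

/-- `G` is `k`-edge-connected: every nonempty proper cut has at least `k` crossing edges. -/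
def EdgeConnected (G : SimpleGraph V) [DecidableRel G.Adj] (k : ℕ) : Prop :=
  ∀ S : Finset V, S.Nonempty → S ≠ Finset.univ → k ≤ (cutEdges G S).card

/-- `S` is a `k`-cut: a nonempty proper vertex set with exactly `k` crossing edges. -/
def IsCut (G : SimpleGraph V) [DecidableRel G.Adj] (k : ℕ) (S : Finset V) : Prop :=
  S.Nonempty ∧ S ≠ Finset.univ ∧ (cutEdges G S).card = k

/-- `(S₁, S₂)` are snug shores for `v` (with respect to the root `r`):
two `k`-cuts avoiding `r` with `v ∉ S₁` and `S₂ = S₁ ∪ {v}`. -/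
def SnugShores (G : SimpleGraph V) [DecidableRel G.Adj] (k : ℕ) (r v : V)
    (S₁ S₂ : Finset V) : Prop :=
  IsCut G k S₁ ∧ IsCut G k S₂ ∧ r ∉ S₁ ∧ r ∉ S₂ ∧ v ∉ S₁ ∧ S₂ = insert v S₁

/-- `v` is a snug vertex (with respect to the root `r`). -/
def Snug (G : SimpleGraph V) [DecidableRel G.Adj] (k : ℕ) (r v : V) : Prop :=
  v ≠ r ∧ k + 1 ≤ G.degree v ∧ ∃ S₁ S₂ : Finset V, SnugShores G k r v S₁ S₂

/-- A snug chain: snug vertices `u 0, …, u t` together with `k`-cuts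
`S 0, …, S (t+1)` such that `(S i, S (i+1))` are snug shores for `u i`. -/
def IsSnugChain (G : SimpleGraph V) [DecidableRel G.Adj] (k : ℕ) (r : V)
    (t : ℕ) (u : ℕ → V) (S : ℕ → Finset V) : Prop :=
  ∀ i ≤ t, Snug G k r (u i) ∧ SnugShores G k r (u i) (S i) (S (i + 1))

set_option linter.unusedSectionVars false

lemma crosses_iff (S : Finset V) (a b : V) :
    Crosses S s(a, b) ↔ (a ∈ S ∧ b ∉ S) ∨ (b ∈ S ∧ a ∉ S) := by
  constructor
  · rintro ⟨x, y, h, hx, hy⟩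
    rw [Sym2.eq_iff] at h
    rcases h with ⟨rfl, rfl⟩ | ⟨rfl, rfl⟩
    · exact Or.inl ⟨hx, hy⟩
    · exact Or.inr ⟨hx, hy⟩
  · rintro (⟨h1, h2⟩ | ⟨h1, h2⟩)
    · exact ⟨a, b, rfl, h1, h2⟩
    · exact ⟨b, a, Sym2.eq_swap, h1, h2⟩

lemma filter_mem_cut (G : SimpleGraph V) [DecidableRel G.Adj] {S : Finset V}
    {v : V} (hvS : v ∉ S) :
    (cutEdges G S).filter (fun e => v ∈ e) =
      (G.neighborFinset v ∩ S).image (fun w => s(v, w)) := by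
  ext e
  simp only [mem_filter, mem_image, mem_inter, SimpleGraph.mem_neighborFinset,
    cutEdges, SimpleGraph.mem_edgeFinset]
  constructor
  · rintro ⟨⟨he, hc⟩, hve⟩
    induction e with
    | _ a b =>
      rw [Sym2.mem_iff] at hve
      rw [crosses_iff] at hc
      rw [SimpleGraph.mem_edgeSet] at he
      rcases hve with rfl | rfl
      · rcases hc with ⟨h1, h2⟩ | ⟨h1, h2⟩
        · exact absurd h1 hvS
        · exact ⟨b, ⟨he, h1⟩, rfl⟩
      · rcases hc with ⟨h1, h2⟩ | ⟨h1, h2⟩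
        · exact ⟨a, ⟨he.symm, h1⟩, Sym2.eq_swap⟩
        · exact absurd h1 hvS
  · rintro ⟨w, ⟨hadj, hwS⟩, rfl⟩
    refine ⟨⟨hadj, ?_⟩, Sym2.mem_mk_left v w⟩
    rw [crosses_iff]
    exact Or.inr ⟨hwS, hvS⟩

lemma filter_not_mem_cut (G : SimpleGraph V) [DecidableRel G.Adj] {S : Finset V}
    {v : V} :
    (cutEdges G (insert v S)).filter (fun e => v ∉ e) =
      (cutEdges G S).filter (fun e => v ∉ e) := by
  ext e
  simp only [mem_filter, cutEdges]
  induction e with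
  | _ a b =>
    simp only [Sym2.mem_iff, crosses_iff, mem_insert, mem_filter]
    constructor
    · rintro ⟨⟨he, hc⟩, hne⟩
      push_neg at hne
      refine ⟨⟨he, ?_⟩, by push_neg; exact hne⟩
      rcases hc with ⟨h1, h2⟩ | ⟨h1, h2⟩
      · rcases h1 with rfl | h1
        · exact absurd rfl hne.1
        · exact Or.inl ⟨h1, fun h => h2 (Or.inr h)⟩
      · rcases h1 with rfl | h1
        · exact absurd rfl hne.2
        · exact Or.inr ⟨h1, fun h => h2 (Or.inr h)⟩
    · rintro ⟨⟨he, hc⟩, hne⟩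
      push_neg at hne
      refine ⟨⟨he, ?_⟩, by push_neg; exact hne⟩
      rcases hc with ⟨h1, h2⟩ | ⟨h1, h2⟩
      · exact Or.inl ⟨Or.inr h1, by rintro (rfl | h); exacts [hne.2 rfl, h2 h]⟩
      · exact Or.inr ⟨Or.inr h1, by rintro (rfl | h); exacts [hne.1 rfl, h2 h]⟩

lemma filter_mem_cut_insert (G : SimpleGraph V) [DecidableRel G.Adj]
    {S : Finset V} {v : V} :
    (cutEdges G (insert v S)).filter (fun e => v ∈ e) =
      (G.neighborFinset v \ S).image (fun w => s(v, w)) := by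
  ext e
  simp only [mem_filter, mem_image, mem_sdiff, SimpleGraph.mem_neighborFinset,
    cutEdges, SimpleGraph.mem_edgeFinset]
  constructor
  · rintro ⟨⟨he, hc⟩, hve⟩
    induction e with
    | _ a b =>
      rw [Sym2.mem_iff] at hve
      rw [crosses_iff] at hc
      rw [SimpleGraph.mem_edgeSet] at he
      simp only [mem_insert] at hc
      rcases hve with rfl | rfl
      · rcases hc with ⟨h1, h2⟩ | ⟨h1, h2⟩
        · exact ⟨b, ⟨he, fun h => h2 (Or.inr h)⟩, rfl⟩
        · exact absurd (Or.inl rfl) h2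
      · rcases hc with ⟨h1, h2⟩ | ⟨h1, h2⟩
        · exact absurd (Or.inl rfl) h2
        · exact ⟨a, ⟨he.symm, fun h => h2 (Or.inr h)⟩, Sym2.eq_swap⟩
  · rintro ⟨w, ⟨hadj, hwS⟩, rfl⟩
    refine ⟨⟨hadj, ?_⟩, Sym2.mem_mk_left v w⟩
    rw [crosses_iff]
    exact Or.inl ⟨mem_insert_self v S, by simp only [mem_insert]; push_neg; exact ⟨fun h => G.ne_of_adj hadj h.symm, hwS⟩⟩

lemma degree_eq_two_mul (G : SimpleGraph V) [DecidableRel G.Adj] {S : Finset V}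
    {v : V} (hvS : v ∉ S) (hS : (cutEdges G S).card = (cutEdges G (insert v S)).card) :
    G.degree v = 2 * (G.neighborFinset v ∩ S).card := by
  have hinj : Set.InjOn (fun w => s(v, w)) ↑(G.neighborFinset v) := fun a _ b _ h => by
    simpa using Sym2.congr_right.mp h
  have e1 := card_filter_add_card_filter_not (s := cutEdges G S)
    (p := fun e => v ∈ e)
  have e2 := card_filter_add_card_filter_not (s := cutEdges G (insert v S))
    (p := fun e => v ∈ e)
  rw [filter_mem_cut G hvS] at e1
  rw [filter_mem_cut_insert G, filter_not_mem_cut G] at e2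
  rw [card_image_of_injOn (hinj.mono (by simp))] at e1
  rw [card_image_of_injOn (hinj.mono (by simp only [coe_sdiff]; exact Set.diff_subset))] at e2
  have hdeg : (G.neighborFinset v ∩ S).card + (G.neighborFinset v \ S).card
      = G.degree v := by
    rw [← SimpleGraph.card_neighborFinset_eq_degree]
    exact card_inter_add_card_sdiff _ _
  omega


/-- For every `k`-cut `S ⊆ V∖{r}` there is at most one vertex `v ∉ S` such that
`(S, S ∪ {v})` form snug shores for `v`. -/
theorem at_most_one_outgoing
    (k : ℕ) (hk : 1 ≤ k) (G : SimpleGraph V) [DecidableRel G.Adj]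
    (hG : EdgeConnected G k) (r : V)
    (S : Finset V) (hS : IsCut G k S) (hrS : r ∉ S)
    (v v' : V) (hv : Snug G k r v) (hv' : Snug G k r v')
    (hvS : v ∉ S) (hv'S : v' ∉ S)
    (h₁ : SnugShores G k r v S (insert v S))
    (h₂ : SnugShores G k r v' S (insert v' S)) :
    v = v' := by
  by_contra hne
  have hcS : (cutEdges G S).card = k := hS.2.2
  have hd : G.degree v = 2 * (G.neighborFinset v ∩ S).card :=
    degree_eq_two_mul G hvS (by rw [hcS, h₁.2.1.2.2])
  have hd' : G.degree v' = 2 * (G.neighborFinset v' ∩ S).card :=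
    degree_eq_two_mul G hv'S (by rw [hcS, h₂.2.1.2.2])
  have hinj : ∀ u : V, Set.InjOn (fun w => s(u, w)) ↑(G.neighborFinset u ∩ S) :=
    fun u a _ b _ h => by simpa using Sym2.congr_right.mp h
  set T := (G.neighborFinset v ∩ S).image (fun w => s(v, w)) with hT
  set T' := (G.neighborFinset v' ∩ S).image (fun w => s(v', w)) with hT'
  have hTsub : T ⊆ cutEdges G S := by
    rw [hT, ← filter_mem_cut G hvS]; exact filter_subset _ _
  have hT'sub : T' ⊆ cutEdges G S := by
    rw [hT', ← filter_mem_cut G hv'S]; exact filter_subset _ _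
  have hdisj : Disjoint T T' := by
    rw [disjoint_left]
    rintro e he he'
    rw [hT, mem_image] at he
    rw [hT', mem_image] at he'
    obtain ⟨w, hw, rfl⟩ := he
    obtain ⟨w', hw', heq⟩ := he'
    rw [Sym2.eq_iff] at heq
    rcases heq with ⟨rfl, rfl⟩ | ⟨rfl, rfl⟩
    · exact hne rfl
    · exact hvS (mem_inter.mp hw').2
  have hsum : T.card + T'.card ≤ k := by
    rw [← card_union_of_disjoint hdisj, ← hcS]
    exact card_le_card (union_subset hTsub hT'sub)
  rw [hT, card_image_of_injOn (hinj v), hT', card_image_of_injOn (hinj v')] at hsum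
  have := hv.2.1
  have := hv'.2.1
  omega
end

section
/- Let k ≥ 1, let G be a k-edge-connected finite simple graph on V, fix a root r ∈ V, and let Q be a finite collection of snug chains of G. Let F be a set of unordered pairs of distinct vertices (links) such that: (a) for every chain in Q with k-cuts S₀, …, S_{t+1}, each S_i (i = 0, …, t+1) is crossed by some link in F; and (b) every k-cut S of G such that, for every chain in Q with snug vertices u₀, …, u_t, the set {u₀, …, u_t} is either entirely contained in S or disjoint from S, is crossed by some link in F. Then every k-cut of G is crossed by some link in F. -/
set_option linter.unusedSectionVars false
set_option linter.unusedVariables false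
set_option linter.unnecessarySimpa false


open Finset

variable {V : Type*} [Fintype V] [DecidableEq V]

lemma crosses_mk {S : Finset V} {x y : V} :
    Crosses S s(x,y) ↔ (x ∈ S ∧ y ∉ S) ∨ (y ∈ S ∧ x ∉ S) := by
  constructor
  · rintro ⟨a, b, hab, hha, hhb⟩
    rw [Sym2.eq_iff] at hab
    rcases hab with ⟨rfl, rfl⟩ | ⟨rfl, rfl⟩
    · exact Or.inl ⟨hha, hhb⟩
    · exact Or.inr ⟨hha, hhb⟩
  · rintro (⟨h1, h2⟩ | ⟨h1, h2⟩)
    · exact ⟨x, y, rfl, h1, h2⟩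
    · exact ⟨y, x, Sym2.eq_swap.symm, h1, h2⟩

lemma submod (G : SimpleGraph V) [DecidableRel G.Adj] (X Y : Finset V) :
    (cutEdges G (X ∩ Y)).card + (cutEdges G (X ∪ Y)).card ≤
      (cutEdges G X).card + (cutEdges G Y).card := by
  classical
  simp only [cutEdges, Finset.card_filter]
  rw [← Finset.sum_add_distrib, ← Finset.sum_add_distrib]
  apply Finset.sum_le_sum
  intro e _
  induction e using Sym2.ind with
  | _ x y =>
    simp only [crosses_mk, Finset.mem_inter, Finset.mem_union]
    by_cases hxX : x ∈ X <;> by_cases hxY : x ∈ Y <;>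
      by_cases hyX : y ∈ X <;> by_cases hyY : y ∈ Y <;> simp_all

lemma posimod (G : SimpleGraph V) [DecidableRel G.Adj] (X Y : Finset V) :
    (cutEdges G (X \ Y)).card + (cutEdges G (Y \ X)).card ≤
      (cutEdges G X).card + (cutEdges G Y).card := by
  classical
  simp only [cutEdges, Finset.card_filter]
  rw [← Finset.sum_add_distrib, ← Finset.sum_add_distrib]
  apply Finset.sum_le_sum
  intro e _
  induction e using Sym2.ind with
  | _ x y =>
    simp only [crosses_mk, Finset.mem_sdiff]
    by_cases hxX : x ∈ X <;> by_cases hxY : x ∈ Y <;>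
      by_cases hyX : y ∈ X <;> by_cases hyY : y ∈ Y <;> simp_all

lemma cutEdges_compl (G : SimpleGraph V) [DecidableRel G.Adj] (S : Finset V) :
    cutEdges G Sᶜ = cutEdges G S := by
  unfold cutEdges
  apply Finset.filter_congr
  intro e _
  induction e using Sym2.ind with
  | _ x y =>
    simp only [crosses_mk, Finset.mem_compl]
    tauto

lemma degree_le_card_cut (G : SimpleGraph V) [DecidableRel G.Adj] (v : V) :
    G.degree v ≤ (cutEdges G {v}).card := by
  rw [← SimpleGraph.card_neighborFinset_eq_degree]
  apply Finset.card_le_card_of_injOn (fun y => s(v, y))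
  · intro y hy
    rw [Finset.mem_coe, SimpleGraph.mem_neighborFinset] at hy
    simp only [Finset.mem_coe, cutEdges, Finset.mem_filter, SimpleGraph.mem_edgeFinset,
      SimpleGraph.mem_edgeSet, crosses_mk, Finset.mem_singleton]
    exact ⟨hy, Or.inl ⟨trivial, hy.ne'⟩⟩
  · intro y _ y' _ h
    exact Sym2.congr_right.mp h

lemma isCut_compl {G : SimpleGraph V} [DecidableRel G.Adj] {k : ℕ} {S : Finset V}
    (h : IsCut G k S) : IsCut G k Sᶜ := by
  obtain ⟨h1, h2, h3⟩ := h
  refine ⟨?_, ?_, by rw [cutEdges_compl]; exact h3⟩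
  · rw [Finset.nonempty_iff_ne_empty]
    intro hc
    exact h2 (by simpa using congrArg compl hc)
  · intro hc
    rw [Finset.nonempty_iff_ne_empty] at h1
    exact h1 (by simpa using congrArg compl hc)

lemma crosses_of_compl {S : Finset V} {ℓ : Sym2 V} (h : Crosses Sᶜ ℓ) : Crosses S ℓ := by
  obtain ⟨x, y, rfl, hx, hy⟩ := h
  exact ⟨y, x, Sym2.eq_swap.symm, by simpa using hy, by simpa using hx⟩

/-- Claim 2: if `v` snug with shores `(A, insert v A)` and `T` is a `k`-cut
with `r ∉ T` and `v ∈ T`, then `A ⊆ T`. -/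

lemma lemA {G : SimpleGraph V} [DecidableRel G.Adj] {k : ℕ}
    (hG : EdgeConnected G k) {r v : V} {A T : Finset V}
    (hd : k + 1 ≤ G.degree v)
    (hA : IsCut G k A) (hB : IsCut G k (insert v A)) (hrA : r ∉ A)
    (hvA : v ∉ A)
    (hT : IsCut G k T) (hrT : r ∉ T) (hvT : v ∈ T) : A ⊆ T := by
  by_contra hsub
  obtain ⟨w, hwA, hwT⟩ := Finset.not_subset.mp hsub
  set B := insert v A with hBdef
  -- (cutEdges G (T ∩ B)).card = k
  have hTBne : (T ∩ B).Nonempty := ⟨v, by simp [hBdef, hvT]⟩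
  have hTBuniv : T ∩ B ≠ univ := by
    intro h
    have : r ∈ T ∩ B := h ▸ Finset.mem_univ r
    exact hrT (Finset.mem_inter.mp this).1
  have hUne : (T ∪ B).Nonempty := hT.1.mono Finset.subset_union_left
  have hUuniv : T ∪ B ≠ univ := by
    intro h
    have : r ∈ T ∪ B := h ▸ Finset.mem_univ r
    rcases Finset.mem_union.mp this with h' | h'
    · exact hrT h'
    · rcases Finset.mem_insert.mp h' with h'' | h''
      · exact hrT (h'' ▸ hvT)
      · exact hrA h''
  have h1 := submod G T B
  have h2 := hG _ hTBne hTBuniv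
  have h3 := hG _ hUne hUuniv
  have hfTB : (cutEdges G (T ∩ B)).card = k := by
    have := hT.2.2; have := hB.2.2; omega
  -- posimodularity on (T ∩ B, A)
  have hdiff : (T ∩ B) \ A = {v} := by
    ext x
    simp only [Finset.mem_sdiff, Finset.mem_inter, hBdef, Finset.mem_insert,
      Finset.mem_singleton]
    constructor
    · rintro ⟨⟨hxT, hx⟩, hxA⟩
      rcases hx with h | h
      · exact h
      · exact absurd h hxA
    · rintro rfl
      exact ⟨⟨hvT, Or.inl rfl⟩, hvA⟩
  have h4 := posimod G (T ∩ B) A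
  rw [hdiff] at h4
  have h5 : k + 1 ≤ (cutEdges G {v}).card :=
    le_trans hd (degree_le_card_cut G v)
  have h6 : (A \ (T ∩ B)).Nonempty :=
    ⟨w, Finset.mem_sdiff.mpr ⟨hwA, fun hc => hwT (Finset.mem_inter.mp hc).1⟩⟩
  have h7 : A \ (T ∩ B) ≠ univ := by
    intro h
    have : r ∈ A \ (T ∩ B) := h ▸ Finset.mem_univ r
    exact hrA (Finset.mem_sdiff.mp this).1
  have h8 := hG _ h6 h7
  have := hA.2.2
  omega

/-- Claim 4: if `v` snug with shores `(A, insert v A)`, `T` is a `k`-cut with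
`r ∉ T`, `A ⊆ T` and `v ∉ T`, then `T = A`. -/

lemma lemB {G : SimpleGraph V} [DecidableRel G.Adj] {k : ℕ}
    (hG : EdgeConnected G k) {r v : V} {A T : Finset V}
    (hd : k + 1 ≤ G.degree v)
    (hA : IsCut G k A) (hB : IsCut G k (insert v A)) (hrA : r ∉ A)
    (hvA : v ∉ A)
    (hT : IsCut G k T) (hrT : r ∉ T) (hsub : A ⊆ T) (hvT : v ∉ T) : T = A := by
  set B := insert v A with hBdef
  have key : T ⊆ B := by
    intro w hwT
    by_contra hwB
    have hXY : Tᶜ ∩ B = {v} := by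
      ext x
      simp only [Finset.mem_inter, Finset.mem_compl, hBdef, Finset.mem_insert,
        Finset.mem_singleton]
      constructor
      · rintro ⟨hxT, hx⟩
        rcases hx with h | h
        · exact h
        · exact absurd (hsub h) hxT
      · rintro rfl
        exact ⟨hvT, Or.inl rfl⟩
    have h1 := submod G Tᶜ B
    rw [hXY, cutEdges_compl] at h1
    have hUne : (Tᶜ ∪ B).Nonempty := ⟨v, Finset.mem_union_right _ (by simp [hBdef])⟩
    have hUuniv : Tᶜ ∪ B ≠ univ := by
      intro h
      have : w ∈ Tᶜ ∪ B := h ▸ Finset.mem_univ w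
      rcases Finset.mem_union.mp this with h' | h'
      · exact (Finset.mem_compl.mp h') hwT
      · exact hwB h'
    have h2 := hG _ hUne hUuniv
    have h5 : k + 1 ≤ (cutEdges G {v}).card := le_trans hd (degree_le_card_cut G v)
    have := hT.2.2; have := hB.2.2
    omega
  apply Finset.Subset.antisymm _ hsub
  intro x hx
  rcases Finset.mem_insert.mp (key hx) with rfl | h
  · exact absurd hx hvT
  · exact h

lemma chain_mono {G : SimpleGraph V} [DecidableRel G.Adj] {k : ℕ} {r : V}
    {t : ℕ} {u : ℕ → V} {S : ℕ → Finset V}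
    (hc : IsSnugChain G k r t u S) {i j : ℕ} (hij : i ≤ j) (hj : j ≤ t + 1) :
    S i ⊆ S j := by
  induction j with
  | zero => simpa [Nat.le_zero.mp hij]
  | succ m ih =>
    rcases Nat.lt_or_ge i (m + 1) with h | h
    · have hm : m ≤ t := by omega
      have h1 : S i ⊆ S m := ih (by omega) (by omega)
      have h2 : S (m + 1) = insert (u m) (S m) := ((hc m hm).2).2.2.2.2.2
      exact h1.trans (h2 ▸ Finset.subset_insert _ _)
    · have : i = m + 1 := by omega
      subst this; exact Finset.Subset.refl _

/-- a `k`-cut avoiding `r` that splits the chain's vertices equals some `S i`. -/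

lemma chain_lemma {G : SimpleGraph V} [DecidableRel G.Adj] {k : ℕ} {r : V}
    (hG : EdgeConnected G k) {t : ℕ} {u : ℕ → V} {S : ℕ → Finset V}
    (hc : IsSnugChain G k r t u S) {T : Finset V}
    (hT : IsCut G k T) (hrT : r ∉ T)
    {a b : ℕ} (hat : a ≤ t) (hbt : b ≤ t) (haT : u a ∈ T) (hbT : u b ∉ T) :
    ∃ i ≤ t + 1, T = S i := by
  -- if u c ∈ T then S (c+1) ⊆ T
  have step1 : ∀ c ≤ t, u c ∈ T → S (c + 1) ⊆ T := by
    intro c hct hcT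
    obtain ⟨hsnug, hAcut, hBcut, hrA, _, hvA, hins⟩ := hc c hct
    have hd : k + 1 ≤ G.degree (u c) := hsnug.2.1
    have hsub : S c ⊆ T :=
      lemA hG hd hAcut (hins ▸ hBcut) hrA hvA hT hrT hcT
    rw [hins]
    exact Finset.insert_subset hcT hsub
  -- membership along the chain is downward closed
  have step2 : ∀ c ≤ t, u c ∈ T → ∀ d ≤ c, u d ∈ T := by
    intro c hct hcT d hdc
    have h1 : u d ∈ S (d + 1) := by
      have hins := ((hc d (le_trans hdc hct)).2).2.2.2.2.2
      rw [hins]; exact Finset.mem_insert_self _ _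
    have h2 : S (d + 1) ⊆ S (c + 1) := chain_mono hc (by omega) (by omega)
    exact step1 c hct hcT (h2 h1)
  -- least index outside T
  have hex : ∃ i, u i ∉ T := ⟨b, hbT⟩
  classical
  set i₀ := Nat.find hex with hi₀def
  have hi₀spec : u i₀ ∉ T := Nat.find_spec hex
  have hi₀le : i₀ ≤ b := Nat.find_min' hex hbT
  have hi₀pos : 1 ≤ i₀ := by
    rcases Nat.eq_zero_or_pos i₀ with h | h
    · exact absurd (step2 a hat haT 0 (Nat.zero_le a)) (h ▸ hi₀spec)
    · exact h
  have hprev : u (i₀ - 1) ∈ T := by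
    by_contra hcon
    exact absurd (Nat.find_min' hex hcon) (by omega)
  have hsub : S i₀ ⊆ T := by
    have := step1 (i₀ - 1) (by omega) hprev
    have he : i₀ - 1 + 1 = i₀ := by omega
    rwa [he] at this
  have hi₀t : i₀ ≤ t := le_trans hi₀le hbt
  obtain ⟨hsnug, hAcut, hBcut, hrA, _, hvA, hins⟩ := hc i₀ hi₀t
  have hd : k + 1 ≤ G.degree (u i₀) := hsnug.2.1
  exact ⟨i₀, by omega, lemB hG hd hAcut (hins ▸ hBcut) hrA hvA hT hrT hsub hi₀spec⟩

/-- If a link set `F` covers all snug shores of every chain in a finite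
collection `Q` of snug chains, and covers every `k`-cut not crossing any chain
in `Q`, then `F` covers every `k`-cut of `G`. -/
theorem cover_after_contracting_snug_chains
    (k : ℕ) (hk : 1 ≤ k) (G : SimpleGraph V) [DecidableRel G.Adj]
    (hG : EdgeConnected G k) (r : V)
    (n : ℕ) (t : Fin n → ℕ) (u : Fin n → ℕ → V) (Sc : Fin n → ℕ → Finset V)
    (hchains : ∀ j : Fin n, IsSnugChain G k r (t j) (u j) (Sc j))
    (F : Finset (Sym2 V)) (hFd : ∀ ℓ ∈ F, ¬ ℓ.IsDiag)
    (ha : ∀ j : Fin n, ∀ i ≤ t j + 1, ∃ ℓ ∈ F, Crosses (Sc j i) ℓ)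
    (hb : ∀ S : Finset V, IsCut G k S →
      (∀ j : Fin n, (∀ i ≤ t j, u j i ∈ S) ∨ (∀ i ≤ t j, u j i ∉ S)) →
      ∃ ℓ ∈ F, Crosses S ℓ) :
    ∀ S : Finset V, IsCut G k S → ∃ ℓ ∈ F, Crosses S ℓ := by
  intro S hS
  by_cases hcomp : ∀ j : Fin n, (∀ i ≤ t j, u j i ∈ S) ∨ (∀ i ≤ t j, u j i ∉ S)
  · exact hb S hS hcomp
  · push_neg at hcomp
    obtain ⟨j, ⟨a, hat, haS⟩, b, hbt, hbS⟩ := hcomp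
    by_cases hr : r ∈ S
    · have hTc : IsCut G k Sᶜ := isCut_compl hS
      obtain ⟨i, hi, hEq⟩ := chain_lemma hG (hchains j) hTc
        (by simp [hr]) hat hbt (Finset.mem_compl.mpr haS) (by simp [hbS])
      obtain ⟨ℓ, hℓF, hcr⟩ := ha j i hi
      exact ⟨ℓ, hℓF, crosses_of_compl (hEq ▸ hcr)⟩
    · obtain ⟨i, hi, hEq⟩ := chain_lemma hG (hchains j) hS hr hbt hat hbS haS
      obtain ⟨ℓ, hℓF, hcr⟩ := ha j i hi
      exact ⟨ℓ, hℓF, hEq ▸ hcr⟩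
end
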